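/- Let R be a commutative ring, ρ ∈ R, and τ : ℕ → R a sequence satisfying τ(i)² = τ(i+1)·ρ for every i ∈ ℕ. For n ∈ ℕ set T(n) = ∏_{i ∈ B(n)} τ(i), where B(n) ⊆ ℕ is the set of positions of the nonzero binary digits of n. Then for all p, q ∈ ℕ one has T(p)·T(q) = T(p+q)·ρ^{σ(p,q)}, where σ(p,q) = s(p) + s(q) − s(p+q) is the number of carries occurring in the addition of p and q in base 2, with s(n) denoting the sum of the binary digits of n. -/

import Mathlib

def binB (n : ℕ) : Finset ℕ := (Finset.range (n + 1)).filter (fun i => n.testBit i)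
def binS (n : ℕ) : ℕ := (binB n).card

lemma mem_binB {n i : ℕ} : i ∈ binB n ↔ n.testBit i := by
  constructor
  · intro h; simpa using (Finset.mem_filter.mp h).2
  · intro h
    refine Finset.mem_filter.mpr ⟨Finset.mem_range.mpr ?_, by simp [h]⟩
    have h2 : 2 ^ i ≤ n := Nat.ge_two_pow_of_testBit h
    have := Nat.lt_two_pow_self (n := i)
    omega

lemma binB_zero : binB 0 = ∅ := by decide

lemma binB_two_mul (n : ℕ) : binB (2*n) = (binB n).image (· + 1) := by
  ext i
  simp only [mem_binB, Finset.mem_image]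
  cases i with
  | zero =>
    simp only [Nat.testBit_zero, decide_eq_true_eq]
    constructor
    · intro h; omega
    · rintro ⟨a, -, h⟩; omega
  | succ j =>
    rw [Nat.testBit_succ, Nat.mul_div_cancel_left _ (by norm_num)]
    constructor
    · intro h; exact ⟨j, h, rfl⟩
    · rintro ⟨a, ha, hEq⟩
      obtain rfl : a = j := by omega
      exact ha

lemma binB_two_mul_add_one (n : ℕ) :
    binB (2*n+1) = insert 0 ((binB n).image (· + 1)) := by
  ext i
  simp only [mem_binB, Finset.mem_insert, Finset.mem_image]
  cases i with
  | zero =>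
    simp only [Nat.testBit_zero, decide_eq_true_eq]
    constructor
    · intro _; exact Or.inl trivial
    · intro _; omega
  | succ j =>
    rw [Nat.testBit_succ]
    have hd : (2*n+1)/2 = n := by omega
    rw [hd]
    constructor
    · intro h; exact Or.inr ⟨j, h, rfl⟩
    · rintro (h | ⟨a, ha, hEq⟩)
      · exact absurd h (by simp)
      · obtain rfl : a = j := by omega
        exact ha

lemma zero_not_mem_image (s : Finset ℕ) : 0 ∉ s.image (· + 1) := by
  intro h
  obtain ⟨a, -, ha⟩ := Finset.mem_image.mp h
  simp at ha

lemma succ_inj' : Function.Injective (fun i : ℕ => i + 1) := fun a b h => by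
  simpa using h

lemma binS_zero : binS 0 = 0 := by simp [binS, binB_zero]

lemma binS_two_mul (n : ℕ) : binS (2*n) = binS n := by
  rw [binS, binB_two_mul, Finset.card_image_of_injective _ succ_inj']; rfl

lemma binS_two_mul_add_one (n : ℕ) : binS (2*n+1) = binS n + 1 := by
  rw [binS, binB_two_mul_add_one, Finset.card_insert_of_notMem (zero_not_mem_image _),
    Finset.card_image_of_injective _ succ_inj']; rfl

lemma binS_succ_le (n : ℕ) : binS (n+1) ≤ binS n + 1 := by
  induction n using Nat.strong_induction_on with
  | _ n ih =>
    rcases Nat.even_or_odd n with ⟨m, hm⟩ | ⟨m, hm⟩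
    · have h1 : n = 2*m := by omega
      rw [h1, binS_two_mul_add_one, binS_two_mul]
    · have h1 : n = 2*m+1 := by omega
      have h2 : 2*m+1+1 = 2*(m+1) := by omega
      rw [h1, h2, binS_two_mul, binS_two_mul_add_one]
      have := ih m (by omega)
      omega

lemma binS_add_le_aux : ∀ N p q : ℕ, p + q = N → binS (p+q) ≤ binS p + binS q := by
  intro N
  induction N using Nat.strong_induction_on with
  | _ N ih =>
    intro p q hN
    rcases Nat.even_or_odd p with ⟨a, ha⟩ | ⟨a, ha⟩ <;>
      rcases Nat.even_or_odd q with ⟨b, hb⟩ | ⟨b, hb⟩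
    · have hp : p = 2*a := by omega
      have hq : q = 2*b := by omega
      have hs : 2*a + 2*b = 2*(a+b) := by omega
      rw [hp, hq, hs, binS_two_mul, binS_two_mul, binS_two_mul]
      rcases Nat.eq_zero_or_pos (a+b) with h | h
      · have h1 : a = 0 := by omega
        have h2 : b = 0 := by omega
        simp [h1, h2]
      · exact ih (a+b) (by omega) a b rfl
    · have hp : p = 2*a := by omega
      have hq : q = 2*b+1 := by omega
      have hs : 2*a + (2*b+1) = 2*(a+b)+1 := by omega
      rw [hp, hq, hs, binS_two_mul, binS_two_mul_add_one, binS_two_mul_add_one]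
      have := ih (a+b) (by omega) a b rfl
      omega
    · have hp : p = 2*a+1 := by omega
      have hq : q = 2*b := by omega
      have hs : 2*a+1 + 2*b = 2*(a+b)+1 := by omega
      rw [hp, hq, hs, binS_two_mul, binS_two_mul_add_one, binS_two_mul_add_one]
      have := ih (a+b) (by omega) a b rfl
      omega
    · have hp : p = 2*a+1 := by omega
      have hq : q = 2*b+1 := by omega
      have hs : 2*a+1 + (2*b+1) = 2*(a+b+1) := by omega
      rw [hp, hq, hs, binS_two_mul, binS_two_mul_add_one, binS_two_mul_add_one]
      have h1 := binS_succ_le (a+b)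
      have h2 := ih (a+b) (by omega) a b rfl
      omega

lemma binS_add_le (p q : ℕ) : binS (p+q) ≤ binS p + binS q :=
  binS_add_le_aux (p+q) p q rfl

section
variable {R : Type*} [CommRing R] (ρ : R)

lemma prod_two_mul (τ : ℕ → R) (n : ℕ) :
    (∏ i ∈ binB (2*n), τ i) = ∏ i ∈ binB n, τ (i+1) := by
  rw [binB_two_mul, Finset.prod_image (fun a _ b _ h => succ_inj' h)]

lemma prod_two_mul_add_one (τ : ℕ → R) (n : ℕ) :
    (∏ i ∈ binB (2*n+1), τ i) = τ 0 * ∏ i ∈ binB n, τ (i+1) := by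
  rw [binB_two_mul_add_one, Finset.prod_insert (zero_not_mem_image _),
    Finset.prod_image (fun a _ b _ h => succ_inj' h)]

lemma one_bit : ∀ n : ℕ, ∀ τ : ℕ → R, (∀ i, τ i ^ 2 = τ (i+1) * ρ) →
    (∏ i ∈ binB n, τ i) * τ 0 =
      (∏ i ∈ binB (n+1), τ i) * ρ ^ (binS n + 1 - binS (n+1)) := by
  intro n
  induction n using Nat.strong_induction_on with
  | _ n ih =>
    intro τ hτ
    rcases Nat.even_or_odd n with ⟨m, hm⟩ | ⟨m, hm⟩
    · have h1 : n = 2*m := by omega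
      rw [h1, prod_two_mul_add_one, prod_two_mul, binS_two_mul, binS_two_mul_add_one]
      have : binS m + 1 - (binS m + 1) = 0 := by omega
      rw [this]
      ring
    · have h1 : n = 2*m+1 := by omega
      have h2 : 2*m+1+1 = 2*(m+1) := by omega
      rw [h1, h2, prod_two_mul_add_one, prod_two_mul, binS_two_mul, binS_two_mul_add_one]
      have hτ' : ∀ i, (fun i => τ (i+1)) i ^ 2 = (fun i => τ (i+1)) (i+1) * ρ :=
        fun i => hτ (i+1)
      have key := ih m (by omega) (fun i => τ (i+1)) hτ'
      have hle := binS_succ_le m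
      have hexp : binS m + 1 + 1 - binS (m+1) = (binS m + 1 - binS (m+1)) + 1 := by omega
      calc τ 0 * (∏ i ∈ binB m, τ (i+1)) * τ 0
          = τ 0 ^ 2 * ∏ i ∈ binB m, τ (i+1) := by ring
        _ = ((∏ i ∈ binB m, τ (i+1)) * τ (0+1)) * ρ := by rw [hτ 0]; ring
        _ = (∏ i ∈ binB (m+1), τ (i+1)) * ρ ^ (binS m + 1 - binS (m+1)) * ρ := by
            rw [key]
        _ = (∏ i ∈ binB (m+1), τ (i+1)) * ρ ^ (binS m + 1 + 1 - binS (m+1)) := by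
            rw [hexp, pow_succ]; ring

lemma main_aux : ∀ N : ℕ, ∀ p q : ℕ, p + q = N → ∀ τ : ℕ → R,
    (∀ i, τ i ^ 2 = τ (i+1) * ρ) →
    (∏ i ∈ binB p, τ i) * (∏ i ∈ binB q, τ i) =
      (∏ i ∈ binB (p + q), τ i) * ρ ^ (binS p + binS q - binS (p + q)) := by
  intro N
  induction N using Nat.strong_induction_on with
  | _ N ih =>
    intro p q hN τ hτ
    have hτ' : ∀ i, (fun i => τ (i+1)) i ^ 2 = (fun i => τ (i+1)) (i+1) * ρ :=
      fun i => hτ (i+1)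
    rcases Nat.even_or_odd q with ⟨b, hb⟩ | ⟨b, hb⟩
    · -- q even
      rcases Nat.eq_zero_or_pos q with hq0 | hq0
      · subst hq0
        simp [binB_zero, binS_zero]
      have hq : q = 2*b := by omega
      rcases Nat.even_or_odd p with ⟨a, ha⟩ | ⟨a, ha⟩
      · have hp : p = 2*a := by omega
        have hs : 2*a + 2*b = 2*(a+b) := by omega
        rw [hp, hq, hs, prod_two_mul, prod_two_mul, prod_two_mul,
          binS_two_mul, binS_two_mul, binS_two_mul]
        exact ih (a+b) (by omega) a b rfl _ hτ'
      · have hp : p = 2*a+1 := by omega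
        have hs : 2*a+1 + 2*b = 2*(a+b)+1 := by omega
        rw [hp, hq, hs, prod_two_mul_add_one, prod_two_mul, prod_two_mul_add_one,
          binS_two_mul, binS_two_mul_add_one, binS_two_mul_add_one]
        have key := ih (a+b) (by omega) a b rfl _ hτ'
        have hexp : binS a + 1 + binS b - (binS (a+b) + 1)
            = binS a + binS b - binS (a+b) := by omega
        rw [hexp, mul_assoc, key]; ring
    · -- q odd
      have hq : q = 2*b + 1 := by omega
      have key := ih (p + 2*b) (by omega) p (2*b) rfl τ hτ
      have key2 := one_bit ρ (p + 2*b) τ hτ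
      have hle1 := binS_add_le p (2*b)
      have hle2 := binS_succ_le (p + 2*b)
      have hprod : (∏ i ∈ binB q, τ i) = (∏ i ∈ binB (2*b), τ i) * τ 0 := by
        rw [hq, prod_two_mul_add_one, prod_two_mul]; ring
      have hsq : binS q = binS (2*b) + 1 := by
        rw [hq, binS_two_mul_add_one, binS_two_mul]
      have hpq : p + q = (p + 2*b) + 1 := by omega
      rw [hprod, hpq, hsq]
      have hexp : binS (p+2*b) + 1 - binS (p+2*b+1) + (binS p + binS (2*b) - binS (p+2*b))
          = binS p + (binS (2*b) + 1) - binS (p + 2*b + 1) := by omega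
      calc (∏ i ∈ binB p, τ i) * ((∏ i ∈ binB (2*b), τ i) * τ 0)
          = ((∏ i ∈ binB (p + 2*b), τ i) * τ 0) *
              ρ ^ (binS p + binS (2*b) - binS (p + 2*b)) := by rw [← mul_assoc, key]; ring
        _ = (∏ i ∈ binB (p + 2*b + 1), τ i) *
              (ρ ^ (binS (p+2*b) + 1 - binS (p+2*b+1)) *
               ρ ^ (binS p + binS (2*b) - binS (p + 2*b))) := by rw [key2]; ring
        _ = (∏ i ∈ binB (p + 2*b + 1), τ i) *
              ρ ^ (binS p + (binS (2*b) + 1) - binS (p + 2*b + 1)) := by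
            rw [← pow_add, hexp]

end

theorem stmt_10 {R : Type*} [CommRing R] (ρ : R) (τ : ℕ → R)
    (hτ : ∀ i : ℕ, τ i ^ 2 = τ (i + 1) * ρ) (p q : ℕ) :
    (∏ i ∈ binB p, τ i) * (∏ i ∈ binB q, τ i) =
      (∏ i ∈ binB (p + q), τ i) * ρ ^ (binS p + binS q - binS (p + q)) := by
  exact main_aux ρ (p+q) p q rfl τ hτ
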